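/- One-dimensional sharp Bellman (dual Hardy) inequality: let 1 < p < ∞ and a, b ∈ ℝ with a/p' < b/p and a + b = D > 0. Define Bf(r) = ∫_r^∞ f(t) t^{D-1} dt. Then ‖r^{-a} Bf(r)‖_{L^p((0,∞), r^{D-1}dr)} ≤ C ‖r^b f(r)‖_{L^p((0,∞), r^{D-1}dr)} with sharp constant C = (b/p − a/p')^{-1}. -/

import Mathlib

open MeasureTheory Set
open scoped ENNReal

/-- The measure `r^{D-1} dr` on `(0, ∞)`. -/
noncomputable def powMeasure (D : ℝ) : Measure ℝ :=
  (volume.restrict (Set.Ioi (0 : ℝ))).withDensity (fun r => ENNReal.ofReal (r ^ (D - 1)))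

lemma measurable_rpow_const (c : ℝ) : Measurable fun x : ℝ => x ^ c := by measurability

lemma lint_Ioi_rpow {c r : ℝ} (hc : c < -1) (hr : 0 < r) :
    ∫⁻ t in Ioi r, ENNReal.ofReal (t ^ c) = ENNReal.ofReal (r ^ (c+1) / (-(c+1))) := by
  rw [← ofReal_integral_eq_lintegral_ofReal (integrableOn_Ioi_rpow_of_lt hc hr)
    ((ae_restrict_iff' measurableSet_Ioi).2 (ae_of_all _ fun t ht =>
      Real.rpow_nonneg (hr.trans ht).le c))]
  rw [integral_Ioi_rpow_of_lt hc hr, neg_div, div_neg]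

lemma lint_Ioo_rpow {c t : ℝ} (hc : -1 < c) (ht : 0 < t) :
    ∫⁻ r in Ioo 0 t, ENNReal.ofReal (r ^ c) = ENNReal.ofReal (t ^ (c+1) / (c+1)) := by
  have hint : IntervalIntegrable (fun x : ℝ => x ^ c) volume 0 t :=
    intervalIntegral.intervalIntegrable_rpow' hc
  have h1 : IntegrableOn (fun x : ℝ => x ^ c) (Ioo 0 t) volume :=
    (intervalIntegrable_iff_integrableOn_Ioo_of_le ht.le).1 hint
  rw [← ofReal_integral_eq_lintegral_ofReal h1
    ((ae_restrict_iff' measurableSet_Ioo).2 (ae_of_all _ fun r hrt =>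
      Real.rpow_nonneg hrt.1.le c))]
  rw [← integral_Ioc_eq_integral_Ioo, ← intervalIntegral.integral_of_le ht.le,
    integral_rpow (Or.inl hc), Real.zero_rpow (by linarith), sub_zero]

lemma ofReal_rpow_mul {r : ℝ} (hr : 0 < r) (x y : ℝ) :
    ENNReal.ofReal (r ^ x) * ENNReal.ofReal (r ^ y) = ENNReal.ofReal (r ^ (x+y)) := by
  rw [← ENNReal.ofReal_mul (Real.rpow_nonneg hr.le x), ← Real.rpow_add hr]

lemma ofReal_rpow_pow {r : ℝ} (hr : 0 < r) (x y : ℝ) :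
    ENNReal.ofReal (r ^ x) ^ y = ENNReal.ofReal (r ^ (x*y)) := by
  rw [ENNReal.ofReal_rpow_of_pos (Real.rpow_pos_of_pos hr x), ← Real.rpow_mul hr.le]

lemma eLpNorm_powMeasure (D : ℝ) {p : ℝ} (hp : 0 < p) (h : ℝ → ℝ) :
    eLpNorm h (ENNReal.ofReal p) (powMeasure D) =
      (∫⁻ r in Ioi 0, ENNReal.ofReal (r ^ (D-1)) * (‖h r‖₊ : ℝ≥0∞) ^ p) ^ (1/p) := by
  have hq0 : ENNReal.ofReal p ≠ 0 := by simp [ENNReal.ofReal_eq_zero, not_le, hp]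
  rw [eLpNorm_eq_lintegral_rpow_enorm_toReal hq0 ENNReal.ofReal_ne_top, ENNReal.toReal_ofReal hp.le]
  unfold powMeasure
  rw [lintegral_withDensity_eq_lintegral_mul_non_measurable _
    ((measurable_rpow_const (D-1)).ennreal_ofReal)
    (ae_of_all _ fun r => ENNReal.ofReal_lt_top)]
  rfl

lemma swap_lemma {H : ℝ → ℝ≥0∞} (hH : Measurable H) (hHfin : ∀ t, H t ≠ ∞) (m : ℝ) :
    ∫⁻ r in Ioi 0, ENNReal.ofReal (r ^ m) * ∫⁻ t in Ioi r, H t =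
    ∫⁻ t in Ioi 0, H t * ∫⁻ r in Ioo 0 t, ENNReal.ofReal (r ^ m) := by
  have L : ∀ r : ℝ, r ∈ Ioi 0 → ENNReal.ofReal (r ^ m) * ∫⁻ t in Ioi r, H t
      = ∫⁻ t in Ioi 0, ENNReal.ofReal (r ^ m) * (Ioi r).indicator H t := by
    intro r hr
    rw [lintegral_const_mul' _ _ ENNReal.ofReal_ne_top]
    congr 1
    rw [lintegral_indicator measurableSet_Ioi, Measure.restrict_restrict measurableSet_Ioi,
      inter_eq_self_of_subset_left (Ioi_subset_Ioi hr.le)]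
  rw [lintegral_congr_ae ((ae_restrict_iff' measurableSet_Ioi).2 (ae_of_all _ L))]
  have hmeas : AEMeasurable (Function.uncurry fun r t =>
      ENNReal.ofReal (r ^ m) * (Ioi r).indicator H t)
      ((volume.restrict (Ioi (0:ℝ))).prod (volume.restrict (Ioi (0:ℝ)))) := by
    have : (Function.uncurry fun r t => ENNReal.ofReal (r ^ m) * (Ioi r).indicator H t)
        = fun q : ℝ × ℝ => ENNReal.ofReal (q.1 ^ m) *
          ({x : ℝ × ℝ | x.1 < x.2}.indicator (fun x => H x.2) q) := by
      ext q
      rcases q with ⟨r, t⟩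
      by_cases h : r < t <;>
        simp [Function.uncurry, Set.indicator, h, mem_Ioi]
    rw [this]
    exact (((measurable_rpow_const m).comp measurable_fst).ennreal_ofReal.mul
      ((hH.comp measurable_snd).indicator
        (measurableSet_lt measurable_fst measurable_snd))).aemeasurable
  rw [lintegral_lintegral_swap hmeas]
  refine lintegral_congr_ae ((ae_restrict_iff' measurableSet_Ioi).2 (ae_of_all _ fun t ht => ?_))
  have key : ∀ r : ℝ, ENNReal.ofReal (r ^ m) * (Ioi r).indicator H t
      = (Iio t).indicator (fun r => ENNReal.ofReal (r ^ m) * H t) r := by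
    intro r; by_cases h : r < t <;> simp [Set.indicator, h, mem_Ioi, mem_Iio]
  simp_rw [key]
  rw [lintegral_indicator measurableSet_Iio, Measure.restrict_restrict measurableSet_Iio,
    show Iio t ∩ Ioi 0 = Ioo 0 t from by ext x; simp [mem_Ioo, mem_Iio, mem_Ioi, and_comm],
    lintegral_mul_const' _ _ (hHfin t), mul_comm]

/-- One-dimensional sharp Bellman (dual Hardy) inequality: for `1 < p < ∞`,
`a/p' < b/p`, `a + b = D > 0`, with `Bf(r) = ∫_r^∞ f(t) t^{D-1} dt`, one has
`‖r^{-a} Bf‖_{L^p(r^{D-1}dr)} ≤ C ‖r^b f‖_{L^p(r^{D-1}dr)}` with the sharp constant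
`C = (b/p - a/p')⁻¹`. -/
theorem bellman_sharp (D p a b : ℝ) (hD : 0 < D) (hp : 1 < p)
    (hab : a / (p / (p - 1)) < b / p) (hsum : a + b = D) :
    (∀ f : ℝ → ℝ, Measurable f →
      eLpNorm (fun r => r ^ (-a) * ∫ t in Set.Ioi r, f t * t ^ (D - 1))
          (ENNReal.ofReal p) (powMeasure D) ≤
        ENNReal.ofReal (b / p - a / (p / (p - 1)))⁻¹ *
          eLpNorm (fun r => r ^ b * f r) (ENNReal.ofReal p) (powMeasure D)) ∧
    (∀ C : ℝ≥0∞,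
      (∀ f : ℝ → ℝ, Measurable f →
        eLpNorm (fun r => r ^ (-a) * ∫ t in Set.Ioi r, f t * t ^ (D - 1))
            (ENNReal.ofReal p) (powMeasure D) ≤
          C * eLpNorm (fun r => r ^ b * f r) (ENNReal.ofReal p) (powMeasure D)) →
      ENNReal.ofReal (b / p - a / (p / (p - 1)))⁻¹ ≤ C) := by
  have hp0 : (0:ℝ) < p := lt_trans one_pos hp
  have hp1 : (0:ℝ) < p - 1 := by linarith
  set κ := b / p - a / (p / (p - 1)) with hκdef
  have hκ : 0 < κ := sub_pos.2 hab
  have hκa : κ = D / p - a := by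
    have hb : b = D - a := by linarith
    rw [hκdef, hb]; field_simp; ring
  set cst := ENNReal.ofReal κ⁻¹ with hcst
  have hcst0 : cst ≠ 0 := by
    simp [hcst, ENNReal.ofReal_eq_zero, not_le, inv_pos, hκ]
  have hcsttop : cst ≠ ⊤ := ENNReal.ofReal_ne_top
  constructor
  · -- main inequality
    intro f hf
    set β := (1 + κ) * (p - 1) / p with hβdef
    set G : ℝ → ℝ≥0∞ := fun t => (‖f t‖₊ : ℝ≥0∞) with hGdef
    have hG : Measurable G := hf.nnnorm.coe_nnreal_ennreal
    set H : ℝ → ℝ≥0∞ := fun t => G t ^ p * ENNReal.ofReal (t ^ ((D-1+β)*p)) with hHdef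
    have hH : Measurable H :=
      (hG.pow_const p).mul (measurable_rpow_const _).ennreal_ofReal
    have hHfin : ∀ t, H t ≠ ∞ := fun t =>
      ENNReal.mul_ne_top (ENNReal.rpow_ne_top_of_nonneg hp0.le ENNReal.coe_ne_top)
        ENNReal.ofReal_ne_top
    set m := -(a*p) + (D-1) - κ*(p-1) with hmdef
    have hm : m + 1 = κ := by
      have : D - a * p = κ * p := by
        rw [hκa]; field_simp
      rw [hmdef]; nlinarith [this]
    set B : ℝ → ℝ≥0∞ := fun r => ∫⁻ t in Ioi r, H t with hBdef
    have hconj : (p/(p-1)).HolderConjugate p :=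
      ((Real.holderConjugate_iff_eq_conjExponent hp).mpr rfl).symm
    -- pointwise bound
    have step1 : ∀ r ∈ Ioi (0:ℝ),
        ENNReal.ofReal (r^(D-1)) *
          (‖r ^ (-a) * ∫ t in Set.Ioi r, f t * t^(D-1)‖₊ : ℝ≥0∞) ^ p ≤
        cst ^ (p-1) * (ENNReal.ofReal (r ^ m) * B r) := by
      intro r hr
      rw [mem_Ioi] at hr
      -- the inner integral bound
      have hJ : (‖(∫ t in Set.Ioi r, f t * t^(D-1) : ℝ)‖₊ : ℝ≥0∞) ≤
          ∫⁻ t in Ioi r, G t * ENNReal.ofReal (t ^ (D - 1)) := by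
        refine (enorm_integral_le_lintegral_enorm _).trans (le_of_eq ?_)
        refine lintegral_congr_ae ((ae_restrict_iff' measurableSet_Ioi).2
          (ae_of_all _ fun t ht => ?_))
        have ht0 : (0:ℝ) < t := hr.trans ht
        dsimp only
        rw [enorm_eq_nnnorm]
        rw [nnnorm_mul, ENNReal.coe_mul,
          ((enorm_eq_nnnorm _).symm.trans (Real.enorm_eq_ofReal (Real.rpow_nonneg ht0.le _)))]
      -- Hölder
      have hHo : (∫⁻ t in Ioi r, G t * ENNReal.ofReal (t ^ (D - 1))) ≤
          (cst * ENNReal.ofReal (r ^ (-κ))) ^ (1/(p/(p-1))) * (B r) ^ (1/p) := by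
        have hHold := ENNReal.lintegral_mul_le_Lp_mul_Lq (volume.restrict (Ioi r)) hconj
          (f := fun t => ENNReal.ofReal (t ^ (-β)))
          (g := fun t => G t * ENNReal.ofReal (t^(D-1+β)))
          ((measurable_rpow_const _).ennreal_ofReal).aemeasurable
          (hG.mul (measurable_rpow_const _).ennreal_ofReal).aemeasurable
        simp only [Pi.mul_apply] at hHold
        have e1 : (∫⁻ t in Ioi r, ENNReal.ofReal (t ^ (-β)) *
            (G t * ENNReal.ofReal (t^(D-1+β))))
            = ∫⁻ t in Ioi r, G t * ENNReal.ofReal (t ^ (D - 1)) := by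
          refine lintegral_congr_ae ((ae_restrict_iff' measurableSet_Ioi).2
            (ae_of_all _ fun t ht => ?_))
          have ht0 : (0:ℝ) < t := hr.trans ht
          dsimp only
          rw [show ENNReal.ofReal (t ^ (-β)) * (G t * ENNReal.ofReal (t^(D-1+β)))
            = G t * (ENNReal.ofReal (t ^ (-β)) * ENNReal.ofReal (t^(D-1+β))) from by ring,
            ofReal_rpow_mul ht0]
          norm_num
        have e2 : (∫⁻ t in Ioi r, ENNReal.ofReal (t ^ (-β)) ^ (p/(p-1)))
            = cst * ENNReal.ofReal (r ^ (-κ)) := by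
          have hβp' : -β * (p/(p-1)) = -(1 + κ) := by
            rw [hβdef]; field_simp
          have : (∫⁻ t in Ioi r, ENNReal.ofReal (t ^ (-β)) ^ (p/(p-1)))
              = ∫⁻ t in Ioi r, ENNReal.ofReal (t ^ (-(1+κ))) := by
            refine lintegral_congr_ae ((ae_restrict_iff' measurableSet_Ioi).2
              (ae_of_all _ fun t ht => ?_))
            dsimp only
            rw [ofReal_rpow_pow (hr.trans ht), hβp']
          rw [this, lint_Ioi_rpow (by linarith) hr]
          rw [show -(1+κ)+1 = -κ from by ring, neg_neg, div_eq_mul_inv, mul_comm,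
            ← ENNReal.ofReal_mul (inv_nonneg.2 hκ.le)]
        have e3 : (∫⁻ t in Ioi r, (G t * ENNReal.ofReal (t^(D-1+β))) ^ p)
            = B r := by
          refine lintegral_congr_ae ((ae_restrict_iff' measurableSet_Ioi).2
            (ae_of_all _ fun t ht => ?_))
          dsimp only
          rw [ENNReal.mul_rpow_of_nonneg _ _ hp0.le, ofReal_rpow_pow (hr.trans ht)]
        rw [e1, e2, e3] at hHold
        exact hHold
      calc ENNReal.ofReal (r^(D-1)) *
          (‖r ^ (-a) * ∫ t in Set.Ioi r, f t * t^(D-1)‖₊ : ℝ≥0∞) ^ p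
          = ENNReal.ofReal (r^(D-1)) * (ENNReal.ofReal (r ^ (-a)) *
            (‖(∫ t in Set.Ioi r, f t * t^(D-1) : ℝ)‖₊ : ℝ≥0∞)) ^ p := by
            rw [nnnorm_mul, ENNReal.coe_mul,
              ((enorm_eq_nnnorm _).symm.trans (Real.enorm_eq_ofReal (Real.rpow_nonneg hr.le _)))]
        _ ≤ ENNReal.ofReal (r^(D-1)) * (ENNReal.ofReal (r ^ (-a)) *
            ((cst * ENNReal.ofReal (r ^ (-κ))) ^ (1/(p/(p-1))) * (B r) ^ (1/p))) ^ p := by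
            gcongr
            exact hJ.trans hHo
        _ = cst ^ (p-1) * (ENNReal.ofReal (r ^ m) * B r) := by
            rw [ENNReal.mul_rpow_of_nonneg _ _ hp0.le,
              ENNReal.mul_rpow_of_nonneg _ _ hp0.le,
              ← ENNReal.rpow_mul, ← ENNReal.rpow_mul,
              show (1/(p/(p-1))) * p = p - 1 from by field_simp,
              show (1/p) * p = 1 from by field_simp,
              ENNReal.rpow_one,
              ENNReal.mul_rpow_of_nonneg _ _ hp1.le,
              ofReal_rpow_pow hr, ofReal_rpow_pow hr]
            calc ENNReal.ofReal (r^(D-1)) * (ENNReal.ofReal (r ^ (-a*p)) *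
                (cst ^ (p-1) * ENNReal.ofReal (r ^ (-κ*(p-1))) * B r))
                = (ENNReal.ofReal (r^(D-1)) * ENNReal.ofReal (r ^ (-a*p)) *
                  ENNReal.ofReal (r ^ (-κ*(p-1)))) * (cst ^ (p-1) * B r) := by ring
              _ = ENNReal.ofReal (r ^ m) * (cst ^ (p-1) * B r) := by
                  rw [ofReal_rpow_mul hr, ofReal_rpow_mul hr,
                    show (D-1) + (-a*p) + (-κ*(p-1)) = m from by rw [hmdef]; ring]
              _ = cst ^ (p-1) * (ENNReal.ofReal (r ^ m) * B r) := by ring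
    -- assemble
    rw [eLpNorm_powMeasure D hp0, eLpNorm_powMeasure D hp0]
    have hκp : κ * p = D - a * p := by
      rw [hκa]; field_simp
    have hL1 : (∫⁻ r in Ioi 0, ENNReal.ofReal (r ^ (D-1)) *
        (‖(fun r => r ^ (-a) * ∫ t in Set.Ioi r, f t * t ^ (D - 1)) r‖₊ : ℝ≥0∞) ^ p)
        ≤ cst ^ (p-1) * ∫⁻ r in Ioi 0, ENNReal.ofReal (r ^ m) * B r := by
      rw [← lintegral_const_mul' _ _ (ENNReal.rpow_ne_top_of_nonneg hp1.le hcsttop)]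
      exact lintegral_mono_ae ((ae_restrict_iff' measurableSet_Ioi).2 (ae_of_all _ step1))
    have hswap := swap_lemma hH hHfin m
    have hexp : (D-1+β)*p + κ = b*p + (D-1) := by
      rw [hβdef]; field_simp; nlinarith [hκp, hsum]
    have hinner : ∀ t ∈ Ioi (0:ℝ), H t * ∫⁻ r in Ioo 0 t, ENNReal.ofReal (r ^ m)
        = cst * (G t ^ p * ENNReal.ofReal (t ^ (b*p + (D-1)))) := by
      intro t ht
      rw [mem_Ioi] at ht
      rw [lint_Ioo_rpow (by linarith) ht, hm]
      rw [show ENNReal.ofReal (t^κ/κ) = cst * ENNReal.ofReal (t^κ) from by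
        rw [div_eq_mul_inv, mul_comm, ← ENNReal.ofReal_mul (inv_nonneg.2 hκ.le)]]
      rw [hHdef]
      dsimp only
      rw [show (G t ^ p * ENNReal.ofReal (t ^ ((D-1+β)*p))) * (cst * ENNReal.ofReal (t^κ))
        = cst * (G t ^ p * (ENNReal.ofReal (t ^ ((D-1+β)*p)) * ENNReal.ofReal (t^κ))) from by
          ring, ofReal_rpow_mul ht, hexp]
    have hR : (∫⁻ t in Ioi 0, ENNReal.ofReal (t ^ (D-1)) *
        (‖(fun r => r ^ b * f r) t‖₊ : ℝ≥0∞) ^ p)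
        = ∫⁻ t in Ioi 0, G t ^ p * ENNReal.ofReal (t ^ (b*p + (D-1))) := by
      refine lintegral_congr_ae ((ae_restrict_iff' measurableSet_Ioi).2
        (ae_of_all _ fun t ht => ?_))
      rw [mem_Ioi] at ht
      dsimp only
      rw [nnnorm_mul, ENNReal.coe_mul, ((enorm_eq_nnnorm _).symm.trans (Real.enorm_eq_ofReal (Real.rpow_nonneg ht.le _))),
        ENNReal.mul_rpow_of_nonneg _ _ hp0.le, ofReal_rpow_pow ht]
      rw [show ENNReal.ofReal (t^(D-1)) * (ENNReal.ofReal (t^(b*p)) * G t ^ p)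
        = G t ^ p * (ENNReal.ofReal (t^(b*p)) * ENNReal.ofReal (t^(D-1))) from by ring,
        ofReal_rpow_mul ht, show b*p + (D-1) = b*p + (D-1) from rfl]
    have hfinal : (∫⁻ r in Ioi 0, ENNReal.ofReal (r ^ (D-1)) *
        (‖(fun r => r ^ (-a) * ∫ t in Set.Ioi r, f t * t ^ (D - 1)) r‖₊ : ℝ≥0∞) ^ p)
        ≤ cst ^ p * ∫⁻ t in Ioi 0, ENNReal.ofReal (t ^ (D-1)) *
          (‖(fun r => r ^ b * f r) t‖₊ : ℝ≥0∞) ^ p := by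
      refine hL1.trans (le_of_eq ?_)
      rw [hswap, lintegral_congr_ae ((ae_restrict_iff' measurableSet_Ioi).2
        (ae_of_all _ hinner)), lintegral_const_mul' _ _ hcsttop, ← mul_assoc, ← hR,
        show cst ^ (p-1) * cst = cst ^ p from by
          nth_rewrite 2 [← ENNReal.rpow_one cst]
          rw [← ENNReal.rpow_add _ _ hcst0 hcsttop]; norm_num]
    calc (∫⁻ r in Ioi 0, ENNReal.ofReal (r ^ (D-1)) *
        (‖(fun r => r ^ (-a) * ∫ t in Set.Ioi r, f t * t ^ (D - 1)) r‖₊ : ℝ≥0∞) ^ p) ^ (1/p)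
        ≤ (cst ^ p * ∫⁻ t in Ioi 0, ENNReal.ofReal (t ^ (D-1)) *
          (‖(fun r => r ^ b * f r) t‖₊ : ℝ≥0∞) ^ p) ^ (1/p) :=
          ENNReal.rpow_le_rpow hfinal (by positivity)
      _ = cst * (∫⁻ t in Ioi 0, ENNReal.ofReal (t ^ (D-1)) *
          (‖(fun r => r ^ b * f r) t‖₊ : ℝ≥0∞) ^ p) ^ (1/p) := by
          rw [ENNReal.mul_rpow_of_nonneg _ _ (by positivity), ← ENNReal.rpow_mul,
            show p * (1/p) = 1 from by field_simp, ENNReal.rpow_one]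

  · intro C hC
    have key : ∀ ε : ℝ, 0 < ε → ENNReal.ofReal (κ + ε)⁻¹ ≤ C := by
      intro ε hε
      set c := b + D/p + ε with hcdef
      have hcD : c - D = κ + ε := by
        rw [hcdef, hκa]
        have hb : b = D - a := by linarith
        rw [hb]; field_simp; ring
      have hcD0 : (0:ℝ) < c - D := by rw [hcD]; linarith
      set f : ℝ → ℝ := (Ioi (1:ℝ)).indicator (fun t => t ^ (-c)) with hfdef
      have hfm : Measurable f := (measurable_rpow_const _).indicator measurableSet_Ioi
      have h1 := hC f hfm
      rw [eLpNorm_powMeasure D hp0, eLpNorm_powMeasure D hp0] at h1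
      have hexpε : (b - c)*p + (D - 1) = -(p*ε) - 1 := by
        rw [hcdef]; field_simp; ring
      have hRint : (∫⁻ r in Ioi 0, ENNReal.ofReal (r ^ (D-1)) *
          (‖(fun r => r ^ b * f r) r‖₊ : ℝ≥0∞) ^ p) = ENNReal.ofReal (1 / (p*ε)) := by
        have congr1 : ∀ r ∈ Ioi (0:ℝ), ENNReal.ofReal (r ^ (D-1)) *
            (‖(fun r => r ^ b * f r) r‖₊ : ℝ≥0∞) ^ p
            = (Ioi (1:ℝ)).indicator (fun r => ENNReal.ofReal (r ^ (-(p*ε) - 1))) r := by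
          intro r hr
          rw [mem_Ioi] at hr
          dsimp only
          by_cases h1r : 1 < r
          · rw [hfdef, indicator_of_mem (mem_Ioi.2 h1r), indicator_of_mem (mem_Ioi.2 h1r),
              ← Real.rpow_add hr,
              ((enorm_eq_nnnorm _).symm.trans (Real.enorm_eq_ofReal (Real.rpow_nonneg hr.le _))), ofReal_rpow_pow hr,
              mul_comm, ofReal_rpow_mul hr,
              show (b + -c)*p + (D-1) = -(p*ε) - 1 from by rw [← hexpε]; ring]
          · rw [hfdef, indicator_of_notMem (by simpa using h1r),
              indicator_of_notMem (by simpa using h1r)]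
            simp [ENNReal.zero_rpow_of_pos hp0]
        rw [lintegral_congr_ae ((ae_restrict_iff' measurableSet_Ioi).2
          (ae_of_all _ congr1)), lintegral_indicator measurableSet_Ioi,
          Measure.restrict_restrict measurableSet_Ioi,
          inter_eq_self_of_subset_left (Ioi_subset_Ioi zero_le_one),
          lint_Ioi_rpow (show -(p*ε) - 1 < -1 from by nlinarith) one_pos,
          Real.one_rpow]
        norm_num
      have hIval : ∀ r : ℝ, 1 < r →
          (∫ t in Set.Ioi r, f t * t ^ (D - 1)) = r ^ (D - c) / (c - D) := by
        intro r hr1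
        have hr0 : (0:ℝ) < r := lt_trans one_pos hr1
        have hcongr : EqOn (fun t => f t * t ^ (D-1)) (fun t => t ^ ((D-1) + -c)) (Ioi r) := by
          intro t ht
          rw [mem_Ioi] at ht
          have ht0 : (0:ℝ) < t := hr0.trans ht
          dsimp only
          rw [hfdef, indicator_of_mem (mem_Ioi.2 (hr1.trans ht)), Real.rpow_add ht0, mul_comm]
        rw [setIntegral_congr_fun measurableSet_Ioi hcongr,
          integral_Ioi_rpow_of_lt (by linarith) hr0,
          show (D-1) + -c + 1 = D - c from by ring, neg_div, ← div_neg, neg_sub]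
      have hLlow : ENNReal.ofReal ((c-D)⁻¹) ^ p * ENNReal.ofReal (1/(p*ε)) ≤
          (∫⁻ r in Ioi 0, ENNReal.ofReal (r ^ (D-1)) *
            (‖(fun r => r ^ (-a) * ∫ t in Set.Ioi r, f t * t ^ (D - 1)) r‖₊ : ℝ≥0∞) ^ p) := by
        refine le_trans (le_of_eq ?_)
          (lintegral_mono' (Measure.restrict_mono (Ioi_subset_Ioi zero_le_one) le_rfl) le_rfl)
        have congr2 : ∀ r ∈ Ioi (1:ℝ), ENNReal.ofReal ((c-D)⁻¹) ^ p *
            ENNReal.ofReal (r ^ (-(p*ε) - 1))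
            = ENNReal.ofReal (r ^ (D-1)) *
              (‖(fun r => r ^ (-a) * ∫ t in Set.Ioi r, f t * t ^ (D - 1)) r‖₊ : ℝ≥0∞) ^ p := by
          intro r hr
          rw [mem_Ioi] at hr
          have hr0 : (0:ℝ) < r := lt_trans one_pos hr
          dsimp only
          rw [hIval r hr, div_eq_mul_inv, ← mul_assoc, ← Real.rpow_add hr0,
            nnnorm_mul, ENNReal.coe_mul,
            ((enorm_eq_nnnorm _).symm.trans (Real.enorm_eq_ofReal (Real.rpow_nonneg hr0.le _))),
            ((enorm_eq_nnnorm _).symm.trans (Real.enorm_eq_ofReal (inv_nonneg.2 hcD0.le))),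
            ENNReal.mul_rpow_of_nonneg _ _ hp0.le, ofReal_rpow_pow hr0]
          rw [show ENNReal.ofReal (r^(D-1)) * (ENNReal.ofReal (r ^ ((-a + (D - c))*p)) *
              ENNReal.ofReal ((c-D)⁻¹) ^ p)
            = ENNReal.ofReal ((c-D)⁻¹) ^ p * (ENNReal.ofReal (r ^ ((-a + (D - c))*p)) *
              ENNReal.ofReal (r^(D-1))) from by ring, ofReal_rpow_mul hr0,
            show (-a + (D - c))*p + (D-1) = -(p*ε) - 1 from by
              rw [← hexpε]; have hb : b = D - a := by linarith
              rw [hb]; ring]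
        rw [← lintegral_congr_ae ((ae_restrict_iff' measurableSet_Ioi).2
          (ae_of_all _ congr2)),
          lintegral_const_mul' _ _ (ENNReal.rpow_ne_top_of_nonneg hp0.le ENNReal.ofReal_ne_top),
          lint_Ioi_rpow (show -(p*ε) - 1 < -1 from by nlinarith) one_pos, Real.one_rpow]
        norm_num
      have hRpos : ENNReal.ofReal (1/(p*ε)) ≠ 0 := by
        simp only [ne_eq, ENNReal.ofReal_eq_zero, not_le]
        positivity
      have hfin : ENNReal.ofReal ((c-D)⁻¹) * ENNReal.ofReal (1/(p*ε)) ^ (1/p)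
          ≤ C * ENNReal.ofReal (1/(p*ε)) ^ (1/p) := by
        rw [hRint] at h1
        refine le_trans (le_of_eq ?_) ((ENNReal.rpow_le_rpow hLlow (by positivity :
          (0:ℝ) ≤ 1/p)).trans h1)
        rw [ENNReal.mul_rpow_of_nonneg _ _ (by positivity), ← ENNReal.rpow_mul,
          show p * (1/p) = 1 from by field_simp, ENNReal.rpow_one]
      have hcancel : ENNReal.ofReal ((c-D)⁻¹) ≤ C := by
        have hne0 : ENNReal.ofReal (1/(p*ε)) ^ (1/p) ≠ 0 := by
          simp only [ne_eq, ENNReal.rpow_eq_zero_iff, not_or, not_and, not_lt]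
          constructor
          · intro h; exact absurd h hRpos
          · intro h; exact absurd h ENNReal.ofReal_ne_top
        have hnetop : ENNReal.ofReal (1/(p*ε)) ^ (1/p) ≠ ⊤ :=
          ENNReal.rpow_ne_top_of_nonneg (by positivity) ENNReal.ofReal_ne_top
        exact (ENNReal.mul_le_mul_iff_left hne0 hnetop).1 hfin
      rwa [hcD] at hcancel
    have lim : Filter.Tendsto (fun ε : ℝ => ENNReal.ofReal (κ + ε)⁻¹)
        (nhdsWithin 0 (Ioi 0)) (nhds (ENNReal.ofReal κ⁻¹)) := by
      have h2 : Filter.Tendsto (fun ε : ℝ => (κ + ε)⁻¹) (nhdsWithin 0 (Ioi 0)) (nhds κ⁻¹) := by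
        apply Filter.Tendsto.mono_left ?_ nhdsWithin_le_nhds
        have h3 : ContinuousAt (fun ε : ℝ => (κ + ε)⁻¹) 0 :=
          (continuousAt_const.add continuousAt_id).inv₀ (by simpa using hκ.ne')
        simpa using h3.tendsto
      exact (ENNReal.continuous_ofReal.tendsto _).comp h2
    exact le_of_tendsto lim (Filter.eventually_of_mem self_mem_nhdsWithin
      (fun ε hε => key ε (mem_Ioi.1 hε)))
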